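/- Let ε = (ε_1,…,ε_n) be independent centered Gaussian random variables with variance σ² (σ > 0), and let X be a real n×p matrix whose columns ψ_1,…,ψ_p satisfy ‖ψ_j‖_2² = n for every j. Fix t > 0 and set λ_init := 4σ√((2t + 2·log p)/n). Then P( max_{1≤j≤p} 4|ε·ψ_j|/n ≤ λ_init ) ≥ 1 − 2·exp(−t). -/

import Mathlib

open MeasureTheory ProbabilityTheory

section Aux
open Real
open scoped NNReal ENNReal

lemma pdf_mul_exp (v : ℝ≥0) (s x : ℝ) :
    gaussianPDFReal 0 v x * Real.exp (s * x)
      = Real.exp (s ^ 2 * v / 2) * gaussianPDFReal (s * v) v x := by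
  by_cases hv : v = 0
  · simp [hv]
  · have hv' : (v : ℝ) ≠ 0 := by exact_mod_cast hv
    simp only [gaussianPDFReal]
    rw [mul_assoc, ← Real.exp_add, mul_left_comm, ← Real.exp_add]
    congr 2
    field_simp
    ring

lemma integral_pdf_mul_exp {v : ℝ≥0} (hv : v ≠ 0) (s : ℝ) :
    ∫ x, gaussianPDFReal 0 v x * Real.exp (s * x) = Real.exp (s ^ 2 * v / 2) := by
  simp_rw [pdf_mul_exp]
  rw [MeasureTheory.integral_const_mul, ProbabilityTheory.integral_gaussianPDFReal_eq_one _ hv, mul_one]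

lemma integrable_pdf_mul_exp (v : ℝ≥0) (s : ℝ) :
    Integrable (fun x => gaussianPDFReal 0 v x * Real.exp (s * x)) := by
  simp_rw [pdf_mul_exp]
  exact (ProbabilityTheory.integrable_gaussianPDFReal _ _).const_mul _

lemma integrable_exp_gaussianReal {v : ℝ≥0} (hv : v ≠ 0) (s : ℝ) :
    Integrable (fun x => Real.exp (s * x)) (gaussianReal 0 v) := by
  rw [gaussianReal_of_var_ne_zero 0 hv]
  have hm : Measurable fun x => (gaussianPDFReal 0 v x).toNNReal :=
    (measurable_gaussianPDFReal 0 v).real_toNNReal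
  have : gaussianPDF 0 v = fun x => ((gaussianPDFReal 0 v x).toNNReal : ℝ≥0∞) := rfl
  rw [this, integrable_withDensity_iff_integrable_smul hm]
  refine (integrable_pdf_mul_exp v s).congr ?_
  filter_upwards with x
  simp [NNReal.smul_def, Real.coe_toNNReal _ (gaussianPDFReal_nonneg 0 v x)]

lemma integral_exp_gaussianReal {v : ℝ≥0} (hv : v ≠ 0) (s : ℝ) :
    ∫ x, Real.exp (s * x) ∂(gaussianReal 0 v) = Real.exp (s ^ 2 * v / 2) := by
  rw [gaussianReal_of_var_ne_zero 0 hv]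
  have hm : Measurable fun x => (gaussianPDFReal 0 v x).toNNReal :=
    (measurable_gaussianPDFReal 0 v).real_toNNReal
  have h1 : gaussianPDF 0 v = fun x => ((gaussianPDFReal 0 v x).toNNReal : ℝ≥0∞) := rfl
  rw [h1, integral_withDensity_eq_integral_smul hm]
  rw [← integral_pdf_mul_exp hv s]
  congr 1
  funext x
  simp [NNReal.smul_def, Real.coe_toNNReal _ (gaussianPDFReal_nonneg 0 v x)]

lemma mgf_map_gaussian {Ω : Type*} [MeasurableSpace Ω] {P : Measure Ω}
    {X : Ω → ℝ} (hX : Measurable X) {v : ℝ≥0} (hv : v ≠ 0)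
    (hd : Measure.map X P = gaussianReal 0 v) (s : ℝ) :
    Integrable (fun ω => Real.exp (s * X ω)) P ∧
      mgf X P s = Real.exp (s ^ 2 * v / 2) := by
  have hint : Integrable (fun ω => Real.exp (s * X ω)) P := by
    have := (integrable_map_measure
      (g := fun x => Real.exp (s * x))
      (f := X)
      (μ := P)
      (Measurable.aestronglyMeasurable (by fun_prop))
      hX.aemeasurable).mp (by rw [hd]; exact integrable_exp_gaussianReal hv s)
    exact this
  refine ⟨hint, ?_⟩
  have : mgf X P s = ∫ x, Real.exp (s * x) ∂(Measure.map X P) := by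
    rw [integral_map hX.aemeasurable (Measurable.aestronglyMeasurable (by fun_prop))]
    rfl
  rw [this, hd, integral_exp_gaussianReal hv s]

lemma chernoff_column
    {Ω : Type*} [MeasurableSpace Ω] {P : Measure Ω} [IsProbabilityMeasure P]
    {n : ℕ} (hn : 0 < n) {σ : ℝ} (hσ : 0 < σ)
    {ε : Fin n → Ω → ℝ} (hmeas : ∀ i, Measurable (ε i))
    (hindep : iIndepFun ε P)
    (hdist : ∀ i, Measure.map (ε i) P = gaussianReal 0 ⟨σ ^ 2, sq_nonneg σ⟩)
    (c : Fin n → ℝ) (hc : ∑ i, c i ^ 2 = n)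
    {a : ℝ} (ha : 0 < a) :
    P {ω | a ≤ ∑ i, c i * ε i ω} ≤
      ENNReal.ofReal (Real.exp (-(a ^ 2) / (2 * σ ^ 2 * n))) := by
  have hv : (⟨σ ^ 2, sq_nonneg σ⟩ : ℝ≥0) ≠ 0 := by
    intro h
    have : σ ^ 2 = 0 := congrArg NNReal.toReal h
    exact (pow_ne_zero 2 hσ.ne') this
  have hσn : (0:ℝ) < σ ^ 2 * n := by positivity
  set s : ℝ := a / (σ ^ 2 * n) with hs
  have hspos : 0 < s := div_pos ha hσn
  set Y : Fin n → Ω → ℝ := fun i ω => c i * ε i ω with hY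
  have hYm : ∀ i, Measurable (Y i) := fun i => (hmeas i).const_mul _
  have hYind : iIndepFun Y P :=
    hindep.comp (fun i x => c i * x) (fun i => measurable_const_mul _)
  have hkey : ∀ i, Integrable (fun ω => Real.exp (s * Y i ω)) P ∧
      mgf (Y i) P s = Real.exp ((s * c i) ^ 2 * σ ^ 2 / 2) := by
    intro i
    have h := mgf_map_gaussian (hmeas i) hv (hdist i) (s * c i)
    have harg : (fun ω => Real.exp (s * Y i ω)) = fun ω => Real.exp ((s * c i) * ε i ω) := by
      funext ω; rw [hY]; ring_nf
    constructor
    · rw [harg]; exact h.1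
    · have : mgf (Y i) P s = mgf (ε i) P (s * c i) := by
        unfold mgf
        congr 1 with ω
      rw [this, h.2]
      rfl
  have hsum : (∑ i, Y i) = fun ω => ∑ i, c i * ε i ω := by
    funext ω; simp [hY]
  have hint : Integrable (fun ω => Real.exp (s * (∑ i, Y i) ω)) P :=
    hYind.integrable_exp_mul_sum hYm (fun i _ => (hkey i).1)
  have hbd := measure_ge_le_exp_mul_mgf (X := ∑ i, Y i) (μ := P) a hspos.le hint
  have hmgfs := iIndepFun.mgf_sum (t := s) hYind hYm Finset.univ
  rw [hmgfs] at hbd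
  have hprod : (∏ i, mgf (Y i) P s) = Real.exp (s ^ 2 * σ ^ 2 * n / 2) := by
    have : ∀ i ∈ Finset.univ, mgf (Y i) P s = Real.exp ((s * c i) ^ 2 * σ ^ 2 / 2) :=
      fun i _ => (hkey i).2
    rw [Finset.prod_congr rfl this, ← Real.exp_sum]
    congr 1
    have : ∑ i, (s * c i) ^ 2 * σ ^ 2 / 2 = (s ^ 2 * σ ^ 2 / 2) * ∑ i, c i ^ 2 := by
      rw [Finset.mul_sum]
      congr 1; funext i; ring
    rw [this, hc]; ring
  rw [hprod, ← Real.exp_add] at hbd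
  have hexp : -s * a + s ^ 2 * σ ^ 2 * n / 2 = -(a ^ 2) / (2 * σ ^ 2 * n) := by
    rw [hs]
    field_simp
    ring
  rw [hexp] at hbd
  rw [ENNReal.le_ofReal_iff_toReal_le (measure_ne_top P _) (Real.exp_nonneg _)]
  rw [hsum] at hbd
  exact hbd


end Aux

/-- Lemma 1 (noise lemma): for i.i.d. centered Gaussian noise with variance `σ²` and
normalized design columns, the event `𝒯` has probability at least `1 - 2·exp(-t)`
when `λ_init = 4σ√((2t + 2 log p)/n)`. -/
theorem gaussian_noise_bound
    (n p : ℕ) (hn : 0 < n) (hp : 0 < p)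
    (X : Matrix (Fin n) (Fin p) ℝ)
    (hX : ∀ j, ∑ i, (X i j) ^ 2 = (n : ℝ))
    (σ : ℝ) (hσ : 0 < σ)
    (Ω : Type*) [MeasurableSpace Ω] (P : Measure Ω) [IsProbabilityMeasure P]
    (ε : Fin n → Ω → ℝ)
    (hmeas : ∀ i, Measurable (ε i))
    (hindep : iIndepFun ε P)
    (hdist : ∀ i, Measure.map (ε i) P = gaussianReal 0 ⟨σ ^ 2, sq_nonneg σ⟩)
    (t : ℝ) (ht : 0 < t)
    (lamInit : ℝ)
    (hlam : lamInit = 4 * σ * Real.sqrt ((2 * t + 2 * Real.log p) / n)) :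
    ENNReal.ofReal (1 - 2 * Real.exp (-t)) ≤
      P {ω | ∀ j, 4 * |∑ i, ε i ω * X i j| / n ≤ lamInit} := by
  have hn' : (0:ℝ) < n := by exact_mod_cast hn
  have hp' : (0:ℝ) < p := by exact_mod_cast hp
  have hlogp : 0 ≤ Real.log p := Real.log_nonneg (by exact_mod_cast hp)
  set q : ℝ := 2 * t + 2 * Real.log p with hq
  have hqpos : 0 < q := by dsimp [q]; linarith
  set a : ℝ := σ * Real.sqrt (n * q) with haa
  have ha : 0 < a := by
    apply mul_pos hσ
    exact Real.sqrt_pos.mpr (by positivity)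
  -- lamInit * n = 4 * a
  have hsqrt : Real.sqrt (q / n) * n = Real.sqrt (n * q) := by
    have h2 : (n:ℝ) = Real.sqrt ((n:ℝ) ^ 2) := (Real.sqrt_sq hn'.le).symm
    rw [h2, ← Real.sqrt_mul (by positivity)]
    rw [Real.sqrt_sq hn'.le]
    congr 1
    field_simp
  have hla : lamInit * n = 4 * a := by
    rw [hlam, haa]
    rw [mul_assoc, mul_assoc]
    congr 1
    rw [hsqrt]
  -- the per-ω, per-j equivalence
  have hiff : ∀ y : ℝ, (4 * y / n ≤ lamInit ↔ y ≤ a) := by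
    intro y
    rw [div_le_iff₀ hn']
    constructor <;> intro h <;> nlinarith
  -- measurability
  set S : Fin p → Ω → ℝ := fun j ω => ∑ i, ε i ω * X i j with hS
  have hSm : ∀ j, Measurable (S j) :=
    fun j => Finset.measurable_sum _ (fun i _ => (hmeas i).mul_const _)
  set E : Set Ω := {ω | ∀ j, 4 * |S j ω| / n ≤ lamInit} with hE
  have hEm : MeasurableSet E := by
    rw [hE, Set.setOf_forall]
    exact MeasurableSet.iInter fun j =>
      measurableSet_le (((hSm j).abs.const_mul 4).div_const _) measurable_const
  -- tail bounds
  have htail : ∀ (c : Fin n → ℝ), (∑ i, c i ^ 2 = (n:ℝ)) →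
      P {ω | a ≤ ∑ i, c i * ε i ω} ≤ ENNReal.ofReal (Real.exp (-t) / p) := by
    intro c hc
    refine (chernoff_column hn hσ hmeas hindep hdist c hc ha).trans ?_
    apply ENNReal.ofReal_le_ofReal
    have ha2 : a ^ 2 = σ ^ 2 * (n * q) := by
      rw [haa, mul_pow, Real.sq_sqrt (by positivity)]
    rw [ha2]
    have : -(σ ^ 2 * (n * q)) / (2 * σ ^ 2 * n) = -(t + Real.log p) := by
      rw [hq]; field_simp
    rw [this, neg_add, Real.exp_add, Real.exp_neg (Real.log p), Real.exp_log hp']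
    rw [div_eq_mul_inv]
  -- union bound
  have hsub : Eᶜ ⊆ ⋃ j, ({ω | a ≤ S j ω} ∪ {ω | a ≤ -(S j ω)}) := by
    intro ω hω
    simp only [hE, Set.mem_compl_iff, Set.mem_setOf_eq, not_forall] at hω
    obtain ⟨j, hj⟩ := hω
    have : ¬ (|S j ω| ≤ a) := fun h => hj ((hiff _).mpr h)
    rw [not_le] at this
    refine Set.mem_iUnion.mpr ⟨j, ?_⟩
    rcases le_or_gt 0 (S j ω) with h | h
    · left; rw [Set.mem_setOf_eq]; rw [abs_of_nonneg h] at this; linarith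
    · right; rw [Set.mem_setOf_eq]; rw [abs_of_neg h] at this; linarith
  have hcompl : P Eᶜ ≤ ENNReal.ofReal (2 * Real.exp (-t)) := by
    refine (measure_mono hsub).trans ?_
    refine (measure_iUnion_le _).trans ?_
    rw [tsum_fintype]
    have hj : ∀ j : Fin p, P ({ω | a ≤ S j ω} ∪ {ω | a ≤ -(S j ω)}) ≤
        ENNReal.ofReal (Real.exp (-t) / p) + ENNReal.ofReal (Real.exp (-t) / p) := by
      intro j
      refine (measure_union_le _ _).trans (add_le_add ?_ ?_)
      · have h1 := htail (fun i => X i j) (hX j)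
        have heq1 : {ω | a ≤ ∑ i, X i j * ε i ω} = {ω | a ≤ S j ω} := by
          ext ω
          have : ∑ i, X i j * ε i ω = S j ω := by
            rw [hS]
            exact Finset.sum_congr rfl fun i _ => mul_comm _ _
          rw [Set.mem_setOf_eq, Set.mem_setOf_eq, this]
        rwa [heq1] at h1
      · have hc : ∑ i, (-(X i j)) ^ 2 = (n:ℝ) := by simpa using hX j
        have := htail (fun i => -(X i j)) hc
        have hkey2 : ∀ ω, ∑ i, -(X i j) * ε i ω = -(S j ω) := by
          intro ω
          rw [hS, ← Finset.sum_neg_distrib]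
          exact Finset.sum_congr rfl fun i _ => by ring
        have heq : {ω | a ≤ ∑ i, -(X i j) * ε i ω} = {ω | a ≤ -(S j ω)} := by
          ext ω
          rw [Set.mem_setOf_eq, Set.mem_setOf_eq, hkey2 ω]
        rwa [heq] at this
    refine (Finset.sum_le_sum (fun j _ => hj j)).trans ?_
    rw [← ENNReal.ofReal_add (by positivity) (by positivity)]
    rw [Finset.sum_const, Finset.card_univ, Fintype.card_fin, nsmul_eq_mul]
    rw [← ENNReal.ofReal_natCast p, ← ENNReal.ofReal_mul hp'.le]
    apply ENNReal.ofReal_le_ofReal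
    rw [← add_div]
    rw [mul_comm, div_mul_cancel₀ _ hp'.ne']
    linarith
  -- conclude
  have hPE : P E = 1 - P Eᶜ := by
    rw [← prob_compl_eq_one_sub hEm.compl, compl_compl]
  calc ENNReal.ofReal (1 - 2 * Real.exp (-t))
      = 1 - ENNReal.ofReal (2 * Real.exp (-t)) := by
        rw [ENNReal.ofReal_sub _ (by positivity), ENNReal.ofReal_one]
    _ ≤ 1 - P Eᶜ := tsub_le_tsub_left hcompl 1
    _ = P E := hPE.symm
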